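/- If a graph G on [n] is 12-representable by a word avoiding both patterns 211 and 221, then after relabeling the isolated vertices of G with the largest labels, G is 12-representable by a permutation; consequently G is a permutation graph. -/

import Mathlib

/-- Every occurrence of `j` precedes every occurrence of `i` in the word `w`. -/
def EveryBefore (w : List ℕ) (j i : ℕ) : Prop :=
  ∀ p q : Fin w.length, w.get p = j → w.get q = i → p < q

/-- The word `w` 12-represents the graph `G` on the vertex set `{1, …, n}`:
`w` uses only letters from `{1, …, n}`, contains each of them at least once, and
for `i < j` in `{1, …, n}`, `i` and `j` are adjacent iff every `j` occurs before every `i`. -/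
def Represents12 (n : ℕ) (G : SimpleGraph ℕ) (w : List ℕ) : Prop :=
  (∀ x ∈ w, 1 ≤ x ∧ x ≤ n) ∧
  (∀ i, 1 ≤ i → i ≤ n → i ∈ w) ∧
  (∀ i j, 1 ≤ i → i < j → j ≤ n → (G.Adj i j ↔ EveryBefore w j i))

/-- `w` is a permutation of `{1, …, n}`, i.e. each letter occurs exactly once. -/
def IsPermWord (n : ℕ) (w : List ℕ) : Prop :=
  w.Perm (List.range' 1 n)

/-- `w` avoids the pattern 211: no subsequence b, a, a with a < b. -/
def Avoids211 (w : List ℕ) : Prop :=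
  ¬ ∃ p q r : Fin w.length, p < q ∧ q < r ∧ w.get q = w.get r ∧ w.get r < w.get p

/-- `w` avoids the pattern 221: no subsequence b, b, a with a < b. -/
def Avoids221 (w : List ℕ) : Prop :=
  ¬ ∃ p q r : Fin w.length, p < q ∧ q < r ∧ w.get p = w.get q ∧ w.get r < w.get p

/-- `v` is an isolated vertex of `G` restricted to `{1, …, n}`. -/
def IsolatedIn (n : ℕ) (G : SimpleGraph ℕ) (v : ℕ) : Prop :=
  ∀ u, 1 ≤ u → u ≤ n → ¬ G.Adj v u

open List

/-! ### Auxiliary lemmas -/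

lemma everyBefore_iff_of_uniq {w : List ℕ} {j i : ℕ} (hj : j ∈ w) (hi : i ∈ w)
    (huj : ∀ p q : Fin w.length, w.get p = j → w.get q = j → p = q)
    (hui : ∀ p q : Fin w.length, w.get p = i → w.get q = i → p = q) :
    EveryBefore w j i ↔ w.idxOf j < w.idxOf i := by
  have hjl : w.idxOf j < w.length := idxOf_lt_length_iff.2 hj
  have hil : w.idxOf i < w.length := idxOf_lt_length_iff.2 hi
  constructor
  · intro H
    exact H ⟨w.idxOf j, hjl⟩ ⟨w.idxOf i, hil⟩ (idxOf_get hjl) (idxOf_get hil)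
  · intro H p q hp hq
    have hpj : p = ⟨w.idxOf j, hjl⟩ := huj p ⟨_, hjl⟩ hp (idxOf_get hjl)
    have hqi : q = ⟨w.idxOf i, hil⟩ := hui q ⟨_, hil⟩ hq (idxOf_get hil)
    subst hpj; subst hqi
    exact H

lemma indexOf_lt_of_pairwise {l : List ℕ} {r : ℕ → ℕ → Prop}
    (hp : l.Pairwise r) {a b : ℕ} (ha : a ∈ l) (hb : b ∈ l) (hab : a ≠ b)
    (hr : ¬ r b a) : l.idxOf a < l.idxOf b := by
  have hal := idxOf_lt_length_iff.2 ha
  have hbl := idxOf_lt_length_iff.2 hb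
  rcases lt_trichotomy (l.idxOf a) (l.idxOf b) with h | h | h
  · exact h
  · exfalso
    apply hab
    have : l.get ⟨l.idxOf a, hal⟩ = l.get ⟨l.idxOf b, hbl⟩ := by
      congr 1
      exact Fin.ext h
    rwa [idxOf_get hal, idxOf_get hbl] at this
  · exfalso
    have h2 := pairwise_iff_get.1 hp ⟨_, hbl⟩ ⟨_, hal⟩ (Fin.mk_lt_mk.2 h)
    rw [idxOf_get hal, idxOf_get hbl] at h2
    exact hr h2

lemma isolated_of_two {n : ℕ} {G : SimpleGraph ℕ} {w : List ℕ}
    (h211 : Avoids211 w) (h221 : Avoids221 w) (hrep : Represents12 n G w)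
    {v : ℕ} {p q : Fin w.length} (hpq : p < q) (hp : w.get p = v) (hq : w.get q = v) :
    IsolatedIn n G v := by
  obtain ⟨hb, hmem, hadj⟩ := hrep
  intro u h1u hun hAdj
  have h1v : 1 ≤ v ∧ v ≤ n := hb v (by rw [← hp]; exact w.get_mem p)
  have hu_mem : u ∈ w := hmem u h1u hun
  have hul := idxOf_lt_length_iff.2 hu_mem
  have hru : w.get ⟨w.idxOf u, hul⟩ = u := idxOf_get hul
  rcases lt_trichotomy u v with huv | huv | huv
  · have hEB : EveryBefore w v u := (hadj u v h1u huv h1v.2).1 hAdj.symm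
    have h2 := hEB q ⟨_, hul⟩ hq hru
    exact h221 ⟨p, q, ⟨_, hul⟩, hpq, h2, hp.trans hq.symm,
      by rw [hru, hp]; exact huv⟩
  · subst huv
    exact G.irrefl hAdj
  · have hEB : EveryBefore w u v := (hadj v u h1v.1 huv hun).1 hAdj
    have h1 := hEB ⟨_, hul⟩ p hru hp
    exact h211 ⟨⟨_, hul⟩, p, q, h1, hpq, hp.trans hq.symm,
      by rw [hq, hru]; exact huv⟩

/-! ### The relabeling permutation -/

open Classical in
noncomputable def myNI (n : ℕ) (G : SimpleGraph ℕ) : List ℕ :=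
  (List.range' 1 n).filter (fun v => decide (¬ IsolatedIn n G v))

open Classical in
noncomputable def myL (n : ℕ) (G : SimpleGraph ℕ) : List ℕ :=
  myNI n G ++ (List.range' 1 n).filter (fun v => !(decide (¬ IsolatedIn n G v)))

lemma myL_perm (n : ℕ) (G : SimpleGraph ℕ) : (myL n G).Perm (List.range' 1 n) := by
  unfold myL myNI
  exact filter_append_perm _ _

lemma myL_length (n : ℕ) (G : SimpleGraph ℕ) : (myL n G).length = n := by
  simpa using (myL_perm n G).length_eq

lemma myL_nodup (n : ℕ) (G : SimpleGraph ℕ) : (myL n G).Nodup :=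
  (myL_perm n G).nodup_iff.2 (nodup_range')

lemma mem_myL (n : ℕ) (G : SimpleGraph ℕ) (v : ℕ) :
    v ∈ myL n G ↔ 1 ≤ v ∧ v ≤ n := by
  rw [(myL_perm n G).mem_iff, mem_range'_1]
  omega

lemma mem_myNI (n : ℕ) (G : SimpleGraph ℕ) (v : ℕ) :
    v ∈ myNI n G ↔ ((1 ≤ v ∧ v ≤ n) ∧ ¬ IsolatedIn n G v) := by
  unfold myNI
  simp only [mem_filter, mem_range'_1, decide_eq_true_eq]
  constructor
  · rintro ⟨⟨h1, h2⟩, h3⟩; exact ⟨⟨h1, by omega⟩, h3⟩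
  · rintro ⟨⟨h1, h2⟩, h3⟩; exact ⟨⟨h1, by omega⟩, h3⟩

lemma myNI_sorted (n : ℕ) (G : SimpleGraph ℕ) : (myNI n G).Pairwise (· < ·) :=
  List.Pairwise.filter _ (pairwise_lt_range' (s := 1) (n := n))

noncomputable def myk (n : ℕ) (G : SimpleGraph ℕ) : ℕ := (myNI n G).length

lemma myk_le (n : ℕ) (G : SimpleGraph ℕ) : myk n G ≤ n := by
  have h := myL_length n G
  rw [myL, length_append] at h
  unfold myk
  omega

lemma myL_get_of_lt (n : ℕ) (G : SimpleGraph ℕ) (idx : ℕ)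
    (h : idx < (myNI n G).length) (h' : idx < (myL n G).length) :
    (myL n G).get ⟨idx, h'⟩ = (myNI n G).get ⟨idx, h⟩ :=
  by simp only [List.get_eq_getElem]; exact List.getElem_append_left h

lemma myL_get_of_ge (n : ℕ) (G : SimpleGraph ℕ) (idx : ℕ)
    (h : (myNI n G).length ≤ idx) (h' : idx < (myL n G).length) :
    IsolatedIn n G ((myL n G).get ⟨idx, h'⟩) := by
  classical
  have h2 : idx - (myNI n G).length <
      ((List.range' 1 n).filter (fun v => !(decide (¬ IsolatedIn n G v)))).length := by
    have := h'
    rw [myL, length_append] at this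
    omega
  have e := List.getElem_append_right (as := myNI n G)
      (bs := (List.range' 1 n).filter (fun v => !(decide (¬ IsolatedIn n G v)))) h
      (h₂ := h')
  rw [show (myL n G).get ⟨idx, h'⟩ =
      ((List.range' 1 n).filter (fun v => !(decide (¬ IsolatedIn n G v)))).get
        ⟨idx - (myNI n G).length, h2⟩ from e]
  have hm := List.get_mem ((List.range' 1 n).filter
      (fun v => !(decide (¬ IsolatedIn n G v)))) ⟨_, h2⟩
  rw [mem_filter] at hm
  have := hm.2
  simp only [Bool.not_eq_true', decide_eq_false_iff_not, not_not] at this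
  exact this

noncomputable def mySigma (n : ℕ) (G : SimpleGraph ℕ) : Equiv.Perm ℕ where
  toFun i := if h : 1 ≤ i ∧ i ≤ n then
      (myL n G).get ⟨i - 1, by rw [myL_length]; omega⟩ else i
  invFun y := if y ∈ myL n G then (myL n G).idxOf y + 1 else y
  left_inv := by
    intro i
    by_cases h : 1 ≤ i ∧ i ≤ n
    · simp only [dif_pos h]
      rw [if_pos (List.get_mem _ _), get_idxOf (myL_nodup n G)]
      show i - 1 + 1 = i
      omega
    · simp only [dif_neg h]
      have hni : i ∉ myL n G := fun hmem => h ((mem_myL n G _).1 hmem)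
      rw [if_neg hni]
  right_inv := by
    intro y
    dsimp only
    by_cases hy : y ∈ myL n G
    · have hl : (myL n G).idxOf y < (myL n G).length := idxOf_lt_length_iff.2 hy
      rw [if_pos hy]
      have hc : 1 ≤ (myL n G).idxOf y + 1 ∧ (myL n G).idxOf y + 1 ≤ n := by
        have := myL_length n G
        omega
      rw [dif_pos hc]
      exact idxOf_get hl
    · rw [if_neg hy, dif_neg]
      intro hc
      exact hy ((mem_myL n G y).2 hc)

lemma mySigma_apply (n : ℕ) (G : SimpleGraph ℕ) (i : ℕ) (h1 : 1 ≤ i) (h2 : i ≤ n) :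
    mySigma n G i = (myL n G).get ⟨i - 1, by rw [myL_length]; omega⟩ :=
  dif_pos ⟨h1, h2⟩

lemma mySigma_bounds (n : ℕ) (G : SimpleGraph ℕ) (i : ℕ) (h1 : 1 ≤ i) (h2 : i ≤ n) :
    1 ≤ mySigma n G i ∧ mySigma n G i ≤ n := by
  rw [mySigma_apply n G i h1 h2]
  exact (mem_myL n G _).1 (List.get_mem _ _)

lemma mySigma_mem_NI (n : ℕ) (G : SimpleGraph ℕ) (i : ℕ) (h1 : 1 ≤ i) (h2 : i ≤ myk n G) :
    mySigma n G i ∈ myNI n G := by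
  have hkn := myk_le n G
  rw [mySigma_apply n G i h1 (le_trans h2 hkn)]
  rw [myL_get_of_lt n G (i - 1) (by unfold myk at h2; omega) _]
  exact List.get_mem _ _

lemma mySigma_not_iso (n : ℕ) (G : SimpleGraph ℕ) (i : ℕ) (h1 : 1 ≤ i) (h2 : i ≤ myk n G) :
    ¬ IsolatedIn n G (mySigma n G i) :=
  ((mem_myNI n G _).1 (mySigma_mem_NI n G i h1 h2)).2

lemma mySigma_iso (n : ℕ) (G : SimpleGraph ℕ) (i : ℕ) (h1 : myk n G < i) (h2 : i ≤ n) :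
    IsolatedIn n G (mySigma n G i) := by
  rw [mySigma_apply n G i (by omega) h2]
  exact myL_get_of_ge n G (i - 1) (by unfold myk at h1; omega) _

lemma mySigma_lt (n : ℕ) (G : SimpleGraph ℕ) {i j : ℕ} (h1 : 1 ≤ i) (hij : i < j)
    (hj : j ≤ myk n G) :
    mySigma n G i < mySigma n G j := by
  have hkn := myk_le n G
  have hiN : i - 1 < (myNI n G).length := by unfold myk at hj; omega
  have hjN : j - 1 < (myNI n G).length := by unfold myk at hj; omega
  rw [mySigma_apply n G i h1 (by omega), mySigma_apply n G j (by omega) (by omega)]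
  rw [myL_get_of_lt n G (i - 1) hiN, myL_get_of_lt n G (j - 1) hjN]
  exact pairwise_iff_get.1 (myNI_sorted n G) ⟨i - 1, hiN⟩ ⟨j - 1, hjN⟩
    (Fin.mk_lt_mk.2 (by omega))

theorem stmt_19 (n : ℕ) (G : SimpleGraph ℕ)
    (h : ∃ w, Avoids211 w ∧ Avoids221 w ∧ Represents12 n G w) :
    ∃ σ : Equiv.Perm ℕ,
      (∀ x, 1 ≤ x → x ≤ n → 1 ≤ σ x ∧ σ x ≤ n) ∧
      (∀ i j, 1 ≤ i → i ≤ n → 1 ≤ j → j ≤ n →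
        IsolatedIn n G (σ i) → ¬ IsolatedIn n G (σ j) → j < i) ∧
      ∃ π, IsPermWord n π ∧
        (∀ i j, 1 ≤ i → i < j → j ≤ n → (G.Adj (σ i) (σ j) ↔ EveryBefore π j i)) := by
  classical
  obtain ⟨w, h211, h221, hrep⟩ := h
  set k := myk n G with hk
  have hkn : k ≤ n := myk_le n G
  have uniq : ∀ v : ℕ, ¬ IsolatedIn n G v →
      ∀ p q : Fin w.length, w.get p = v → w.get q = v → p = q := by
    intro v hv p q hp hq
    by_contra hne
    rcases lt_or_gt_of_ne hne with hlt | hgt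
    · exact hv (isolated_of_two h211 h221 hrep hlt hp hq)
    · exact hv (isolated_of_two h211 h221 hrep hgt hq hp)
  set σ := mySigma n G with hσ
  refine ⟨σ, ?_, ?_, ?_⟩
  · intro x h1 h2
    exact mySigma_bounds n G x h1 h2
  · intro i j h1i hin h1j hjn hiso hniso
    have hik : k < i := by
      by_contra hle
      push_neg at hle
      exact (mySigma_not_iso n G i h1i hle) hiso
    have hjk : j ≤ k := by
      by_contra hgt
      push_neg at hgt
      exact hniso (mySigma_iso n G j hgt hjn)
    omega
  · set key : ℕ → ℕ := fun a => w.idxOf (σ a) with hkey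
    set π₁ := (List.range' 1 k).mergeSort (fun a b => decide (key a ≤ key b)) with hπ₁
    set π := π₁ ++ List.range' (k + 1) (n - k) with hπ
    have hperm1 : π₁.Perm (List.range' 1 k) := mergeSort_perm _ _
    have eapp : List.range' 1 k ++ List.range' (k + 1) (n - k) = List.range' 1 n := by
      have e := List.range'_append (s := 1) (m := k) (n := n - k) (step := 1)
      rw [show 1 + 1 * k = k + 1 from by omega, show k + (n - k) = n from by omega] at e
      exact e
    have hpermπ : π.Perm (List.range' 1 n) := by
      rw [hπ, ← eapp]
      exact hperm1.append_right _
    have hπnodup : π.Nodup := hpermπ.nodup_iff.2 (nodup_range')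
    have hπ₁nodup : π₁.Nodup := hperm1.nodup_iff.2 (nodup_range')
    have hmemπ : ∀ x, 1 ≤ x → x ≤ n → x ∈ π := by
      intro x h1 h2
      rw [hpermπ.mem_iff, mem_range'_1]
      omega
    have hmemπ₁ : ∀ x, x ∈ π₁ ↔ 1 ≤ x ∧ x ≤ k := by
      intro x
      rw [hperm1.mem_iff, mem_range'_1]
      omega
    have hsort : π₁.Pairwise (fun a b => key a ≤ key b) := by
      have hs := List.pairwise_mergeSort (le := fun a b => decide (key a ≤ key b))
        (fun a b c hab hbc => by
          simp only [decide_eq_true_eq] at *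
          omega)
        (fun a b => by
          simp only [Bool.or_eq_true, decide_eq_true_eq]
          omega)
        (List.range' 1 k)
      exact hs.imp (fun h => of_decide_eq_true h)
    have keyinj : ∀ a b : ℕ, 1 ≤ a → a ≤ n → 1 ≤ b → b ≤ n → key a = key b → a = b := by
      intro a b h1a han h1b hbn hke
      have hma : σ a ∈ w := hrep.2.1 _ (mySigma_bounds n G a h1a han).1
        (mySigma_bounds n G a h1a han).2
      have hmb : σ b ∈ w := hrep.2.1 _ (mySigma_bounds n G b h1b hbn).1
        (mySigma_bounds n G b h1b hbn).2
      have hla := idxOf_lt_length_iff.2 hma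
      have hlb := idxOf_lt_length_iff.2 hmb
      have : σ a = σ b := by
        rw [← idxOf_get hla, ← idxOf_get hlb]
        congr 1
        exact Fin.ext hke
      exact σ.injective this
    have uniqπ : ∀ x : ℕ, ∀ p q : Fin π.length, π.get p = x → π.get q = x → p = q := by
      intro x p q hp hq
      exact (nodup_iff_injective_get.1 hπnodup) (hp.trans hq.symm)
    refine ⟨π, hpermπ, ?_⟩
    intro i j h1i hij hjn
    have h1j : 1 ≤ j := by omega
    have hin : i ≤ n := by omega
    have hEBπ : EveryBefore π j i ↔ π.idxOf j < π.idxOf i :=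
      everyBefore_iff_of_uniq (hmemπ j h1j hjn) (hmemπ i h1i hin) (uniqπ j) (uniqπ i)
    rcases le_or_gt j k with hjk | hjk
    · -- both non-isolated
      have hik : i ≤ k := by omega
      have hab : σ i < σ j := mySigma_lt n G h1i hij hjk
      have hba := mySigma_bounds n G i h1i hin
      have hbb := mySigma_bounds n G j h1j hjn
      have hni_i : ¬ IsolatedIn n G (σ i) := mySigma_not_iso n G i h1i hik
      have hni_j : ¬ IsolatedIn n G (σ j) := mySigma_not_iso n G j h1j hjk
      have hAdj : G.Adj (σ i) (σ j) ↔ EveryBefore w (σ j) (σ i) :=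
        hrep.2.2 (σ i) (σ j) hba.1 hab hbb.2
      have hma : σ i ∈ w := hrep.2.1 _ hba.1 hba.2
      have hmb : σ j ∈ w := hrep.2.1 _ hbb.1 hbb.2
      have hEBw : EveryBefore w (σ j) (σ i) ↔ key j < key i :=
        everyBefore_iff_of_uniq hmb hma (uniq _ hni_j) (uniq _ hni_i)
      have hiπ₁ : i ∈ π₁ := (hmemπ₁ i).2 ⟨h1i, hik⟩
      have hjπ₁ : j ∈ π₁ := (hmemπ₁ j).2 ⟨h1j, hjk⟩
      have hidx : π.idxOf j < π.idxOf i ↔ key j < key i := by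
        rw [hπ, idxOf_append_of_mem hiπ₁, idxOf_append_of_mem hjπ₁]
        constructor
        · intro hlt
          by_contra hge
          push_neg at hge
          rcases eq_or_lt_of_le hge with heq | hlt'
          · exact absurd (keyinj i j h1i hin h1j hjn heq) (by omega)
          · have := indexOf_lt_of_pairwise hsort hiπ₁ hjπ₁ (by omega) (by omega)
            omega
        · intro hlt
          exact indexOf_lt_of_pairwise hsort hjπ₁ hiπ₁ (by omega) (by omega)
      rw [hAdj, hEBw, hEBπ, hidx]
    · -- σ j isolated
      have hisoj : IsolatedIn n G (σ j) := mySigma_iso n G j hjk hjn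
      rcases le_or_gt i k with hik | hik
      · -- i non-isolated, j isolated
        have hiπ₁ : i ∈ π₁ := (hmemπ₁ i).2 ⟨h1i, hik⟩
        have hjπ₁ : j ∉ π₁ := by
          rw [hmemπ₁]
          omega
        apply iff_of_false
        · intro hA
          have hba := mySigma_bounds n G i h1i hin
          exact hisoj (σ i) hba.1 hba.2 hA.symm
        · rw [hEBπ]
          intro hlt
          have hii : π.idxOf i < π₁.length := by
            rw [hπ, idxOf_append_of_mem hiπ₁]
            exact idxOf_lt_length_iff.2 hiπ₁
          have hjj : π₁.length ≤ π.idxOf j := by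
            rw [hπ, idxOf_append_of_notMem hjπ₁]
            omega
          omega
      · -- both isolated
        have hisoi : IsolatedIn n G (σ i) := mySigma_iso n G i hik hin
        apply iff_of_false
        · intro hA
          have hbb := mySigma_bounds n G j h1j hjn
          exact hisoi (σ j) hbb.1 hbb.2 hA
        · rw [hEBπ]
          intro hlt
          have hiπ₁ : i ∉ π₁ := by rw [hmemπ₁]; omega
          have hjπ₁ : j ∉ π₁ := by rw [hmemπ₁]; omega
          have hit : i ∈ List.range' (k + 1) (n - k) := by
            rw [mem_range'_1]; omega
          have hjt : j ∈ List.range' (k + 1) (n - k) := by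
            rw [mem_range'_1]; omega
          have h1 : π.idxOf i = π₁.length + (List.range' (k + 1) (n - k)).idxOf i := by
            rw [hπ, idxOf_append_of_notMem hiπ₁]
          have h2 : π.idxOf j = π₁.length + (List.range' (k + 1) (n - k)).idxOf j := by
            rw [hπ, idxOf_append_of_notMem hjπ₁]
          have h3 : (List.range' (k + 1) (n - k)).idxOf i <
              (List.range' (k + 1) (n - k)).idxOf j :=
            indexOf_lt_of_pairwise (pairwise_lt_range') hit hjt (by omega) (by omega)
          omega
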